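/- The spectral radius of J^{BR} is strictly less than 1 (equivalently, all eigenvalues lie in the open interval (−1, 1)) if and only if Σ_{n=1}^N τ_n β_n/(λ_n(1 + 2β_n)) < 1. -/

import Mathlib

open Finset Matrix

lemma aux_re_inv (d : ℝ) (hd0 : 0 ≤ d) (hd1 : d ≤ 1) (ξ : ℂ)
    (hξ : 1 ≤ ‖ξ‖) : (((d : ℂ) - ξ)⁻¹).re ≤ 1 / (1 + d) := by
  have habs : 1 ≤ ξ.re ^ 2 + ξ.im ^ 2 := by
    have hsq := Complex.sq_norm ξ
    rw [Complex.normSq_apply] at hsq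
    nlinarith [mul_self_le_mul_self (by norm_num : (0:ℝ) ≤ 1) hξ]
  have hre : ((d:ℂ) - ξ).re = d - ξ.re := by simp
  have him : ((d:ℂ) - ξ).im = -ξ.im := by simp
  rw [Complex.inv_re, Complex.normSq_apply, hre, him]
  set a := ξ.re
  set b := ξ.im
  have hd' : (0:ℝ) < 1 + d := by linarith
  rcases eq_or_lt_of_le (add_nonneg (mul_self_nonneg (d - a)) (mul_self_nonneg (-b))) with h | h
  · rw [← h, div_zero]
    exact div_nonneg zero_le_one hd'.le
  · rw [div_le_div_iff₀ h hd']
    rcases le_or_gt d a with hc | hc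
    · nlinarith
    · rcases le_or_gt a (-1) with hc2 | hc2
      · nlinarith
      · nlinarith

/-- The spectral radius of `J^{BR}` is < 1 (all eigenvalues in (−1,1))
iff `Σ_n τ_n β_n / (λ_n (1 + 2 β_n)) < 1`. -/
theorem JBR_stability_iff (N : ℕ) (hN : 1 ≤ N)
    (β τ lam : Fin N → ℝ)
    (hβ : ∀ n, 0 < β n) (hτ : ∀ n, 0 < τ n) (hlam : ∀ n, 0 < lam n)
    (J : Matrix (Fin N) (Fin N) ℝ)
    (hJ : ∀ i k, J i k = if i = k then β i * (lam i - τ i) / (lam i * (1 + β i))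
        else -(β i * τ k / (lam i * (1 + β i)))) :
    (∀ ξ : ℂ, ξ ∈ spectrum ℂ (J.map (algebraMap ℝ ℂ)) → ‖ξ‖ < 1)
      ↔ ∑ n, τ n * β n / (lam n * (1 + 2 * β n)) < 1 := by
  set d : Fin N → ℝ := fun n => β n / (1 + β n) with hd_def
  set u : Fin N → ℝ := fun n => β n / (lam n * (1 + β n)) with hu_def
  set c : Fin N → ℝ := fun n => τ n * u n with hc_def
  have hβ1 : ∀ n, (0:ℝ) < 1 + β n := fun n => by linarith [hβ n]
  have hd0 : ∀ n, 0 < d n := fun n => div_pos (hβ n) (hβ1 n)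
  have hd1 : ∀ n, d n < 1 := fun n => (div_lt_one (hβ1 n)).2 (by linarith [hβ n])
  have hu0 : ∀ n, 0 < u n := fun n => div_pos (hβ n) (mul_pos (hlam n) (hβ1 n))
  have hc0 : ∀ n, 0 < c n := fun n => mul_pos (hτ n) (hu0 n)
  have hJ' : ∀ i k, J i k = (if i = k then d i else 0) - u i * τ k := by
    intro i k
    have h1 := (hlam i).ne'
    have h2 := (hβ1 i).ne'
    rw [hJ]
    by_cases h : i = k
    · subst h
      simp only [if_pos rfl, ↓reduceIte, hd_def, hu_def]
      field_simp
    · simp only [if_neg h, hu_def]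
      field_simp
      ring
  have hterm : ∀ n, τ n * β n / (lam n * (1 + 2 * β n)) = c n / (1 + d n) := by
    intro n
    have h1 := (hlam n).ne'
    have h2 := (hβ1 n).ne'
    have h3 := hβ n
    have h4 := hτ n
    simp only [hc_def, hu_def, hd_def]
    rw [div_eq_div_iff (by positivity) (by positivity)]
    field_simp
    ring
  constructor
  · -- spectral radius < 1 → sum < 1
    intro hspec
    by_contra hge
    push_neg at hge
    have hge' : (1:ℝ) ≤ ∑ n, c n / (1 + d n) := by
      calc (1:ℝ) ≤ ∑ n, τ n * β n / (lam n * (1 + 2 * β n)) := hge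
        _ = ∑ n, c n / (1 + d n) := Finset.sum_congr rfl fun n _ => hterm n
    set f : ℝ → ℝ := fun ξ => ∑ n, c n / (d n - ξ) with hf_def
    set M : ℝ := 1 + ∑ n, c n with hM_def
    have hcsum : 0 ≤ ∑ n, c n := Finset.sum_nonneg fun n _ => (hc0 n).le
    have hM1 : (1:ℝ) ≤ M := by rw [hM_def]; linarith
    have hfM : f (-M) < 1 := by
      have hstep : ∀ n ∈ univ, c n / (d n - (-M)) ≤ c n / M :=
        fun n _ => div_le_div_of_nonneg_left (hc0 n).le (by linarith) (by linarith [hd0 n])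
      calc f (-M) ≤ ∑ n, c n / M := Finset.sum_le_sum hstep
        _ = (∑ n, c n) / M := by rw [Finset.sum_div]
        _ < 1 := by rw [div_lt_one (by linarith)]; linarith
    have hf1 : (1:ℝ) ≤ f (-1) := by
      have : f (-1) = ∑ n, c n / (1 + d n) := by
        apply Finset.sum_congr rfl
        intro n _
        rw [sub_neg_eq_add, add_comm]
      rw [this]; exact hge'
    have hcont : ContinuousOn f (Set.Icc (-M) (-1)) := by
      apply continuousOn_finset_sum
      intro n _
      apply ContinuousOn.div continuousOn_const (continuousOn_const.sub continuousOn_id)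
      intro ξ hξ
      have := hξ.2
      have := hd0 n
      intro h
      have h : d n - ξ = 0 := h
      linarith
    obtain ⟨ξ₀, hξ₀mem, hfξ₀⟩ :=
      intermediate_value_Icc (show (-M:ℝ) ≤ -1 by linarith) hcont ⟨hfM.le, hf1⟩
    have hξ₀ : ξ₀ ≤ -1 := hξ₀mem.2
    have hden : ∀ n, 0 < d n - ξ₀ := fun n => by linarith [hd0 n]
    set x : Fin N → ℝ := fun n => u n / (d n - ξ₀) with hx_def
    have hx0 : x ≠ 0 := by
      intro h
      have h1 : x ⟨0, hN⟩ = 0 := by rw [h]; rfl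
      have h2 : 0 < x ⟨0, hN⟩ := div_pos (hu0 _) (hden _)
      linarith
    have hs : ∑ k, τ k * x k = 1 := by
      calc ∑ k, τ k * x k = ∑ k, c k / (d k - ξ₀) := by
            apply Finset.sum_congr rfl
            intro k _
            rw [hx_def, hc_def, mul_div_assoc]
        _ = 1 := hfξ₀
    have hmul : J.mulVec x = ξ₀ • x := by
      funext i
      have hrow : J.mulVec x i = ∑ k, J i k * x k := rfl
      have : ∑ k, J i k * x k = d i * x i - u i * ∑ k, τ k * x k := by
        calc ∑ k, J i k * x k
            = ∑ k, ((if i = k then d i * x k else 0) - u i * (τ k * x k)) := by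
              apply Finset.sum_congr rfl
              intro k _
              rw [hJ' i k]
              by_cases h : i = k <;> simp [h] <;> ring
          _ = (∑ k, if i = k then d i * x k else 0) - ∑ k, u i * (τ k * x k) :=
              Finset.sum_sub_distrib _ _
          _ = d i * x i - u i * ∑ k, τ k * x k := by
              rw [Finset.sum_ite_eq univ i (fun k => d i * x k) , ← Finset.mul_sum]
              simp
      rw [hrow, this, hs, mul_one]
      have hne := (hden i).ne'
      show _ = ξ₀ * x i
      rw [hx_def]
      field_simp
      ring
    have hdet : (ξ₀ • (1:Matrix (Fin N) (Fin N) ℝ) - J).det = 0 := by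
      rw [← Matrix.exists_mulVec_eq_zero_iff]
      refine ⟨x, hx0, ?_⟩
      rw [Matrix.sub_mulVec, Matrix.smul_mulVec, Matrix.one_mulVec, hmul, sub_self]
    have hmem : ((ξ₀:ℂ)) ∈ spectrum ℂ (J.map (algebraMap ℝ ℂ)) := by
      rw [spectrum.mem_iff, Matrix.isUnit_iff_isUnit_det, Algebra.algebraMap_eq_smul_one]
      have hmap : ((ξ₀:ℂ) • 1 - J.map (algebraMap ℝ ℂ))
          = (ξ₀ • 1 - J).map (algebraMap ℝ ℂ) := by
        ext i k
        by_cases h : i = k <;>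
          simp [Matrix.map_apply, Matrix.one_apply, h]
      rw [hmap, ← RingHom.mapMatrix_apply, ← RingHom.map_det, hdet]
      simp
    have habs1 : (1:ℝ) ≤ ‖((ξ₀:ℂ))‖ := by
      rw [Complex.norm_real, Real.norm_eq_abs, abs_of_nonpos (by linarith)]
      linarith
    exact absurd (hspec _ hmem) (not_lt.2 habs1)
  · -- sum < 1 → spectral radius < 1
    intro hsum ξ hξ
    by_contra habs
    push_neg at habs
    rw [spectrum.mem_iff, Matrix.isUnit_iff_isUnit_det] at hξ
    have hdet0 : ((algebraMap ℂ (Matrix (Fin N) (Fin N) ℂ)) ξ - J.map (algebraMap ℝ ℂ)).det = 0 := by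
      by_contra h
      exact hξ (isUnit_iff_ne_zero.2 h)
    obtain ⟨x, hx0, hxv⟩ := Matrix.exists_mulVec_eq_zero_iff.2 hdet0
    have heig : ∀ i, ∑ k, (J i k : ℂ) * x k = ξ * x i := by
      intro i
      have h0 := congrFun hxv i
      rw [Algebra.algebraMap_eq_smul_one, Matrix.sub_mulVec, Matrix.smul_mulVec,
        Matrix.one_mulVec] at h0
      have h1 : ξ * x i - (J.map (algebraMap ℝ ℂ)).mulVec x i = 0 := by
        simpa using h0
      have h2 : (J.map (algebraMap ℝ ℂ)).mulVec x i = ∑ k, (J i k : ℂ) * x k := by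
        simp [Matrix.mulVec, dotProduct, Matrix.map_apply]
      rw [h2] at h1
      linear_combination -h1
    set s : ℂ := ∑ k, (τ k : ℂ) * x k with hs_def
    have key : ∀ i, (d i : ℂ) * x i - (u i : ℂ) * s = ξ * x i := by
      intro i
      rw [← heig i]
      symm
      calc ∑ k, (J i k : ℂ) * x k
          = ∑ k, ((if i = k then (d i:ℂ) * x k else 0) - (u i:ℂ) * ((τ k:ℂ) * x k)) := by
            apply Finset.sum_congr rfl
            intro k _
            rw [hJ' i k]
            by_cases h : i = k <;> simp [h] <;> push_cast <;> ring
        _ = (∑ k, if i = k then (d i:ℂ) * x k else 0) - ∑ k, (u i:ℂ) * ((τ k:ℂ) * x k) :=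
            Finset.sum_sub_distrib _ _
        _ = (d i:ℂ) * x i - (u i:ℂ) * s := by
            rw [Finset.sum_ite_eq univ i (fun k => (d i:ℂ) * x k), ← Finset.mul_sum, hs_def]
            simp
    by_cases hs : s = 0
    · obtain ⟨i, hi⟩ := Function.ne_iff.1 hx0
      have hk := key i
      rw [hs, mul_zero, sub_zero] at hk
      have hξd : (d i : ℂ) = ξ := mul_right_cancel₀ hi hk
      rw [← hξd, Complex.norm_real, Real.norm_eq_abs, abs_of_pos (hd0 i)] at habs
      linarith [hd1 i]
    · have hne : ∀ n, (d n : ℂ) - ξ ≠ 0 := by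
        intro n h
        have hh : ξ = (d n : ℂ) := by linear_combination -h
        rw [hh, Complex.norm_real, Real.norm_eq_abs, abs_of_pos (hd0 n)] at habs
        linarith [hd1 n]
      have hx : ∀ i, x i = (u i : ℂ) * s / ((d i:ℂ) - ξ) := by
        intro i
        rw [eq_div_iff (hne i)]
        linear_combination key i
      have hsum1 : ∑ n, (c n : ℂ) / ((d n:ℂ) - ξ) = 1 := by
        have h2 : s * 1 = s * ∑ n, (c n:ℂ) / ((d n:ℂ) - ξ) := by
          rw [mul_one, Finset.mul_sum, hs_def]
          apply Finset.sum_congr rfl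
          intro n _
          rw [hx n, hc_def]
          push_cast
          field_simp
          ring
        exact (mul_left_cancel₀ hs h2).symm
      have hre : ∑ n, c n * (((d n:ℂ) - ξ)⁻¹).re = 1 := by
        have h3 := congrArg Complex.re hsum1
        rw [Complex.re_sum] at h3
        calc ∑ n, c n * (((d n:ℂ) - ξ)⁻¹).re
            = ∑ n, ((c n : ℂ) / ((d n:ℂ) - ξ)).re := by
              apply Finset.sum_congr rfl
              intro n _
              rw [div_eq_mul_inv, Complex.re_ofReal_mul]
          _ = 1 := by rw [h3]; simp
      have hfinal : (1:ℝ) < 1 := by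
        calc (1:ℝ) = ∑ n, c n * (((d n:ℂ) - ξ)⁻¹).re := hre.symm
          _ ≤ ∑ n, c n / (1 + d n) := by
              apply Finset.sum_le_sum
              intro n _
              have h4 := aux_re_inv (d n) (hd0 n).le (hd1 n).le ξ habs
              calc c n * (((d n:ℂ) - ξ)⁻¹).re ≤ c n * (1 / (1 + d n)) :=
                    mul_le_mul_of_nonneg_left h4 (hc0 n).le
                _ = c n / (1 + d n) := by rw [mul_one_div]
          _ = ∑ n, τ n * β n / (lam n * (1 + 2 * β n)) :=
              Finset.sum_congr rfl fun n _ => (hterm n).symm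
          _ < 1 := hsum
      exact absurd hfinal (lt_irrefl 1)
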